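/- (Disjoint alignments onto different fragments) Let X, Y be strings, let 0 ≤ i ≤ j ≤ |Y| and 0 ≤ i' ≤ j' ≤ |Y|, and let A : X → Y[i..j) and A' : X → Y[i'..j') be alignments which, interpreted as paths in the alignment graph AG(X,Y), share no common diagonal edge. Then selfed(X) ≤ |i - i'| + ed_A(X, Y[i..j)) + ed_{A'}(X, Y[i'..j')) + |j - j'|. -/

import Mathlib

abbrev Pt : Type := ℕ × ℕ

/-- A single step in an alignment path: right (deletion of an `X`-character),
down (insertion of a `Y`-character), or diagonal (aligning a pair of characters). -/
def AlignStep (p q : Pt) : Prop :=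
  q = (p.1 + 1, p.2) ∨ q = (p.1, p.2 + 1) ∨ q = (p.1 + 1, p.2 + 1)

/-- `A` is a monotone lattice path from `s` to `t` in the alignment graph. -/
def IsPath (s t : Pt) (A : List Pt) : Prop :=
  A.head? = some s ∧ A.getLast? = some t ∧ A.Chain' AlignStep

/-- The edges (consecutive pairs) of a path. -/
def edges (A : List Pt) : List (Pt × Pt) := A.zip A.tail

/-- Unweighted edit cost contributed by one edge: a diagonal edge costs 0 if the
two characters match and 1 otherwise (substitution); horizontal/vertical edges
(deletions/insertions) cost 1. -/
def edStep {α : Type*} [DecidableEq α] (X Y : List α) (e : Pt × Pt) : ℕ :=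
  if e.2 = (e.1.1 + 1, e.1.2 + 1) then (if X[e.1.1]? = Y[e.1.2]? then 0 else 1) else 1

/-- The number of edits made by the alignment (path) `A` of `X` onto `Y`. -/
def edCost {α : Type*} [DecidableEq α] (X Y : List α) (A : List Pt) : ℕ :=
  ((edges A).map (edStep X Y)).sum

/-- Weighted cost contributed by one edge, under weight function `w` (with `none` playing
the role of `ε`): diagonal edges cost `w X[x] Y[y]`, horizontal `w X[x] ε`, vertical `w ε Y[y]`. -/
noncomputable def wStep {α : Type*} (w : Option α → Option α → ℝ) (X Y : List α)
    (e : Pt × Pt) : ℝ :=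
  if e.2 = (e.1.1 + 1, e.1.2 + 1) then w (X[e.1.1]?) (Y[e.1.2]?)
  else if e.2 = (e.1.1 + 1, e.1.2) then w (X[e.1.1]?) none
  else w none (Y[e.1.2]?)

/-- The weighted cost of the alignment (path) `A` of `X` onto `Y` under `w`. -/
noncomputable def wCost {α : Type*} (w : Option α → Option α → ℝ) (X Y : List α)
    (A : List Pt) : ℝ :=
  ((edges A).map (wStep w X Y)).sum

/-- Unweighted (Levenshtein) edit distance. -/
noncomputable def ed {α : Type*} [DecidableEq α] (X Y : List α) : ℕ :=
  sInf { c | ∃ A, IsPath (0, 0) (X.length, Y.length) A ∧ edCost X Y A = c }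

/-- Weighted edit distance under `w`. -/
noncomputable def wed {α : Type*} (w : Option α → Option α → ℝ) (X Y : List α) : ℝ :=
  sInf { c | ∃ A, IsPath (0, 0) (X.length, Y.length) A ∧ wCost w X Y A = c }

/-- A path contains no diagonal edge on the main diagonal,
i.e. it never aligns a character to itself. -/
def NoSelfDiag (A : List Pt) : Prop :=
  ∀ e ∈ edges A, ¬ (e.1.1 = e.1.2 ∧ e.2 = (e.1.1 + 1, e.1.2 + 1))

/-- The self-edit distance of `X`: the minimum number of edits over all
self-alignments of `X` (alignments of `X` onto itself never aligning a character
to itself). -/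
noncomputable def selfed {α : Type*} [DecidableEq α] (X : List α) : ℕ :=
  sInf { c | ∃ A, IsPath (0, 0) (X.length, X.length) A ∧ NoSelfDiag A ∧ edCost X X A = c }

/-- The fragment `X[a..b)`. -/
def frag {α : Type*} (X : List α) (a b : ℕ) : List α := (X.drop a).take (b - a)

def Rc (j j' y y' : ℕ) : ℕ := (j - y) + (j' - y') - 2 * (min j j' - max y y')

lemma Rc_symm (j j' y y' : ℕ) : Rc j j' y y' = Rc j' j y' y := by unfold Rc; omega

lemma Rc_start (i j i' j' : ℕ) (h : i ≤ j) (h' : i' ≤ j') :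
    Rc j j' i i' ≤ Nat.dist i i' + Nat.dist j j' := by
  unfold Rc; rw [Nat.dist, Nat.dist]; omega

lemma Rc_step (j j' y y' : ℕ) : Rc j j' (y+1) y' ≤ Rc j j' y y' + 1 := by unfold Rc; omega

lemma Rc_strict (j j' y y' : ℕ) (h1 : y < y') (h2 : y < j) :
    Rc j j' (y+1) y' + 1 ≤ Rc j j' y y' := by unfold Rc; omega

lemma Rc_end (j j' y : ℕ) (h : y < j) : Rc j j' (y+1) j' + 1 ≤ Rc j j' y j' := by
  unfold Rc; omega

lemma Rc_both (j j' y : ℕ) (h : y < j) (h' : y < j') : Rc j j' (y+1) (y+1) ≤ Rc j j' y y := by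
  unfold Rc; omega

lemma align_mono : ∀ (l : List Pt) (p q : Pt), l.Chain' AlignStep → l.head? = some p →
    l.getLast? = some q → p.1 ≤ q.1 ∧ p.2 ≤ q.2 := by
  intro l
  induction l with
  | nil => intro p q _ h; simp at h
  | cons a t ih =>
    intro p q hc hh hl
    simp at hh; subst hh
    cases t with
    | nil => simp at hl; subst hl; exact ⟨le_refl _, le_refl _⟩
    | cons b t' =>
      replace hc := List.isChain_cons_cons.mp hc
      rw [List.getLast?_cons_cons] at hl
      have := ih b q hc.2 (by simp) hl
      rcases hc.1 with h|h|h <;> subst h <;> simp at this ⊢ <;> omega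

lemma edges_cons (p q : Pt) (l : List Pt) (h : l.head? = some q) :
    edges (p :: l) = (p, q) :: edges l := by
  cases l with
  | nil => simp at h
  | cons a t => simp at h; subst h; rfl

lemma edges_single (p : Pt) : edges [p] = [] := rfl

lemma edCost_cons {α : Type*} [DecidableEq α] (X Y : List α) (p q : Pt) (l : List Pt)
    (h : l.head? = some q) : edCost X Y (p::l) = edStep X Y (p,q) + edCost X Y l := by
  unfold edCost; rw [edges_cons p q l h]; simp

lemma edCost_single {α : Type*} [DecidableEq α] (X Y : List α) (p : Pt) :
    edCost X Y [p] = 0 := rfl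

lemma getLast?_cons' (p q : Pt) (l : List Pt) (h : l.head? = some q) :
    (p::l).getLast? = l.getLast? := by
  cases l with
  | nil => simp at h
  | cons a t => rw [List.getLast?_cons_cons]

lemma noSelfDiag_cons (p q : Pt) (l : List Pt) (h : l.head? = some q)
    (h1 : NoSelfDiag l) (h2 : ¬ (p.1 = p.2 ∧ q = (p.1 + 1, p.2 + 1))) :
    NoSelfDiag (p::l) := by
  intro e he
  rw [edges_cons p q l h] at he
  rcases List.mem_cons.1 he with rfl | he
  · exact h2
  · exact h1 e he

lemma edStep_horiz {α : Type*} [DecidableEq α] (X Y : List α) (p : Pt) :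
    edStep X Y (p, (p.1+1, p.2)) = 1 := by simp [edStep]

lemma edStep_vert {α : Type*} [DecidableEq α] (X Y : List α) (p : Pt) :
    edStep X Y (p, (p.1, p.2+1)) = 1 := by simp [edStep]

lemma edStep_diag {α : Type*} [DecidableEq α] (X Y : List α) (p : Pt) :
    edStep X Y (p, (p.1+1, p.2+1)) = if X[p.1]? = Y[p.2]? then 0 else 1 := by
  simp [edStep]

lemma edStep_le_one {α : Type*} [DecidableEq α] (X Y : List α) (e : Pt × Pt) :
    edStep X Y e ≤ 1 := by
  unfold edStep; split_ifs <;> omega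

lemma mem_edges_head (p q : Pt) (l : List Pt) : (p, q) ∈ edges (p :: q :: l) := by
  rw [edges_cons p q _ (by simp)]; exact List.mem_cons_self

lemma pfst (a b : ℕ) : ((a, b) : Pt).1 = a := rfl
lemma psnd (a b : ℕ) : ((a, b) : Pt).2 = b := rfl

lemma key {α : Type*} [DecidableEq α] (X Y : List α) (j j' : ℕ) :
    ∀ (k : ℕ) (sa sa' : List Pt) (a a' : Pt),
      sa.length + sa'.length ≤ k →
      sa.head? = some a → sa'.head? = some a' →
      sa.getLast? = some (X.length, j) → sa'.getLast? = some (X.length, j') →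
      sa.Chain' AlignStep → sa'.Chain' AlignStep →
      (∀ e : Pt × Pt, e.2 = (e.1.1 + 1, e.1.2 + 1) → e ∈ edges sa → e ∉ edges sa') →
      ∃ B : List Pt, B.head? = some (a.1, a'.1) ∧
        B.getLast? = some (X.length, X.length) ∧ B.Chain' AlignStep ∧ NoSelfDiag B ∧
        edCost X X B ≤ edCost X Y sa + edCost X Y sa' + Rc j j' a.2 a'.2 := by
  intro k
  induction k with
  | zero =>
    intro sa sa' a a' hk hh hh' _ _ _ _ _
    cases sa with
    | nil => simp at hh
    | cons p ta => simp at hk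
  | succ k ih =>
    intro sa sa' a a' hk hh hh' hl hl' hc hc' hd
    cases sa with
    | nil => simp at hh
    | cons p ta =>
      simp at hh; subst hh
      cases sa' with
      | nil => simp at hh'
      | cons p' ta' =>
        simp at hh'; subst hh'
        cases ta with
        | nil =>
          -- left path exhausted: p = (X.length, j)
          simp at hl; subst hl
          cases ta' with
          | nil =>
            simp at hl'; subst hl'
            refine ⟨[(X.length, X.length)], by simp, by simp, List.isChain_singleton _, ?_,
              by simp [edCost, edges]⟩
            intro e he; simp [edges] at he
          | cons b' l' =>
            have hc2' := List.isChain_cons_cons.mp hc'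
            have hl2' := hl'
            rw [List.getLast?_cons_cons] at hl2'
            have hmono' := align_mono (b'::l') b' (X.length, j') hc2'.2 (by simp) hl2'
            obtain ⟨B, hBh, hBl, hBc, hBn, hBcost⟩ :=
              ih [(X.length, j)] (b'::l') (X.length, j) b'
                (by simp at hk ⊢; omega) (by simp) (by simp) (by simp) hl2'
                (List.isChain_singleton _) hc2'.2 (by intro e _ hm; simp [edges] at hm)
            simp only [pfst, psnd, edCost_single] at hBh hBcost ⊢
            rw [edCost_cons X Y p' b' (b'::l') rfl]
            rcases hc2'.1 with hb' | hb' | hb' <;> subst hb' <;>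
              simp only [pfst, psnd] at hBh hBcost hmono'
            · -- A' horizontal
              refine ⟨(X.length, p'.1) :: B, by simp, ?_, ?_, ?_, ?_⟩
              · rw [getLast?_cons' _ _ _ hBh]; exact hBl
              · refine List.isChain_cons.mpr ?_
                refine ⟨?_, hBc⟩
                intro q hq; rw [hBh] at hq; simp at hq; subst hq
                right; left; rfl
              · refine noSelfDiag_cons _ _ _ hBh hBn ?_
                simp [Prod.ext_iff]
              · rw [edCost_cons X X _ _ _ hBh]
                have h1 : edStep X X ((X.length, p'.1), (X.length, p'.1 + 1)) = 1 := by
                  simp [edStep, Prod.ext_iff]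
                have h2 : edStep X Y (p', ((p'.1 + 1, p'.2) : Pt)) = 1 := edStep_horiz X Y p'
                rw [h1, h2]
                omega
            · -- A' vertical : no emit
              refine ⟨B, hBh, hBl, hBc, hBn, ?_⟩
              have h2 : edStep X Y (p', ((p'.1, p'.2 + 1) : Pt)) = 1 := edStep_vert X Y p'
              rw [h2]
              have hstep : Rc j j' j (p'.2 + 1) ≤ Rc j j' j p'.2 + 1 := by
                rw [Rc_symm j j' j (p'.2 + 1), Rc_symm j j' j p'.2]
                exact Rc_step j' j p'.2 j
              omega
            · -- A' diagonal : emit vertical, strict credit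
              have hy' : p'.2 < j' := Nat.lt_of_succ_le hmono'.2
              refine ⟨(X.length, p'.1) :: B, by simp, ?_, ?_, ?_, ?_⟩
              · rw [getLast?_cons' _ _ _ hBh]; exact hBl
              · refine List.isChain_cons.mpr ?_
                refine ⟨?_, hBc⟩
                intro q hq; rw [hBh] at hq; simp at hq; subst hq
                right; left; rfl
              · refine noSelfDiag_cons _ _ _ hBh hBn ?_
                simp [Prod.ext_iff]
              · rw [edCost_cons X X _ _ _ hBh]
                have h1 : edStep X X ((X.length, p'.1), (X.length, p'.1 + 1)) = 1 := by
                  simp [edStep, Prod.ext_iff]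
                rw [h1]
                have hstep : Rc j j' j (p'.2 + 1) + 1 ≤ Rc j j' j p'.2 := by
                  rw [Rc_symm j j' j (p'.2 + 1), Rc_symm j j' j p'.2]
                  exact Rc_end j' j p'.2 hy'
                omega
        | cons b l =>
          have hc2 := List.isChain_cons_cons.mp hc
          have hl2 := hl
          rw [List.getLast?_cons_cons] at hl2
          have hmono := align_mono (b::l) b (X.length, j) hc2.2 (by simp) hl2
          cases ta' with
          | nil =>
            -- right path exhausted: p' = (X.length, j')
            simp at hl'; subst hl'
            obtain ⟨B, hBh, hBl, hBc, hBn, hBcost⟩ :=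
              ih (b::l) [(X.length, j')] b (X.length, j')
                (by simp at hk ⊢; omega) (by simp) (by simp) hl2 (by simp)
                hc2.2 (List.isChain_singleton _) (by intro e _ _ hm; simp [edges] at hm)
            simp only [pfst, psnd, edCost_single] at hBh hBcost ⊢
            rw [edCost_cons X Y p b (b::l) rfl]
            rcases hc2.1 with hb | hb | hb <;> subst hb <;>
              simp only [pfst, psnd] at hBh hBcost hmono
            · -- A horizontal : emit horizontal edge
              refine ⟨(p.1, X.length) :: B, by simp, ?_, ?_, ?_, ?_⟩
              · rw [getLast?_cons' _ _ _ hBh]; exact hBl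
              · refine List.isChain_cons.mpr ?_
                refine ⟨?_, hBc⟩
                intro q hq; rw [hBh] at hq; simp at hq; subst hq
                left; rfl
              · refine noSelfDiag_cons _ _ _ hBh hBn ?_
                simp [Prod.ext_iff]
              · rw [edCost_cons X X _ _ _ hBh]
                have h1 : edStep X X ((p.1, X.length), (p.1 + 1, X.length)) = 1 := by
                  simp [edStep, Prod.ext_iff]
                have h2 : edStep X Y (p, ((p.1 + 1, p.2) : Pt)) = 1 := edStep_horiz X Y p
                rw [h1, h2]
                omega
            · -- A vertical : no emit
              refine ⟨B, hBh, hBl, hBc, hBn, ?_⟩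
              have h2 : edStep X Y (p, ((p.1, p.2 + 1) : Pt)) = 1 := edStep_vert X Y p
              rw [h2]
              have hstep := Rc_step j j' p.2 j'
              omega
            · -- A diagonal : emit horizontal, strict credit
              have hyj : p.2 < j := Nat.lt_of_succ_le hmono.2
              refine ⟨(p.1, X.length) :: B, by simp, ?_, ?_, ?_, ?_⟩
              · rw [getLast?_cons' _ _ _ hBh]; exact hBl
              · refine List.isChain_cons.mpr ?_
                refine ⟨?_, hBc⟩
                intro q hq; rw [hBh] at hq; simp at hq; subst hq
                left; rfl
              · refine noSelfDiag_cons _ _ _ hBh hBn ?_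
                simp [Prod.ext_iff]
              · rw [edCost_cons X X _ _ _ hBh]
                have h1 : edStep X X ((p.1, X.length), (p.1 + 1, X.length)) = 1 := by
                  simp [edStep, Prod.ext_iff]
                rw [h1]
                have hstep := Rc_end j j' p.2 hyj
                omega
          | cons b' l' =>
            have hc2' := List.isChain_cons_cons.mp hc'
            have hl2' := hl'
            rw [List.getLast?_cons_cons] at hl2'
            have hmono' := align_mono (b'::l') b' (X.length, j') hc2'.2 (by simp) hl2'
            have hdL : ∀ e : Pt × Pt, e.2 = (e.1.1 + 1, e.1.2 + 1) →
                e ∈ edges (b::l) → e ∉ edges (p'::b'::l') := by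
              intro e h1 h2
              exact hd e h1 (by rw [edges_cons p b (b::l) rfl]; exact List.mem_cons_of_mem _ h2)
            have hdR : ∀ e : Pt × Pt, e.2 = (e.1.1 + 1, e.1.2 + 1) →
                e ∈ edges (p::b::l) → e ∉ edges (b'::l') := by
              intro e h1 h2 h3
              exact hd e h1 h2
                (by rw [edges_cons p' b' (b'::l') rfl]; exact List.mem_cons_of_mem _ h3)
            have hdLR : ∀ e : Pt × Pt, e.2 = (e.1.1 + 1, e.1.2 + 1) →
                e ∈ edges (b::l) → e ∉ edges (b'::l') := by
              intro e h1 h2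
              exact hdR e h1 (by rw [edges_cons p b (b::l) rfl]; exact List.mem_cons_of_mem _ h2)
            rcases hc2.1 with hb | hbvd
            · -- A horizontal : advance A, emit horizontal edge
              subst hb
              obtain ⟨B, hBh, hBl, hBc, hBn, hBcost⟩ :=
                ih (((p.1 + 1, p.2) : Pt)::l) (p'::b'::l') ((p.1 + 1, p.2) : Pt) p'
                  (by simp at hk ⊢; omega) (by simp) (by simp) hl2 hl' hc2.2 hc' hdL
              simp only [pfst, psnd] at hBh hBcost
              rw [edCost_cons X Y p ((p.1 + 1, p.2) : Pt) (((p.1 + 1, p.2) : Pt)::l) rfl]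
              refine ⟨(p.1, p'.1) :: B, by simp, ?_, ?_, ?_, ?_⟩
              · rw [getLast?_cons' _ _ _ hBh]; exact hBl
              · refine List.isChain_cons.mpr ?_
                refine ⟨?_, hBc⟩
                intro q hq; rw [hBh] at hq; simp at hq; subst hq
                left; rfl
              · refine noSelfDiag_cons _ _ _ hBh hBn ?_
                simp [Prod.ext_iff]
              · rw [edCost_cons X X _ _ _ hBh]
                have h1 : edStep X X ((p.1, p'.1), (p.1 + 1, p'.1)) = 1 := by
                  simp [edStep, Prod.ext_iff]
                have h2 : edStep X Y (p, ((p.1 + 1, p.2) : Pt)) = 1 := edStep_horiz X Y p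
                rw [h1, h2]
                omega
            · rcases hc2'.1 with hb' | hb'vd
              · -- A' horizontal : advance A', emit vertical edge
                subst hb'
                obtain ⟨B, hBh, hBl, hBc, hBn, hBcost⟩ :=
                  ih (p::b::l) (((p'.1 + 1, p'.2) : Pt)::l') p ((p'.1 + 1, p'.2) : Pt)
                    (by simp at hk ⊢; omega) (by simp) (by simp) hl hl2' hc hc2'.2 hdR
                simp only [pfst, psnd] at hBh hBcost
                rw [edCost_cons X Y p' ((p'.1 + 1, p'.2) : Pt) (((p'.1 + 1, p'.2) : Pt)::l') rfl]
                refine ⟨(p.1, p'.1) :: B, by simp, ?_, ?_, ?_, ?_⟩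
                · rw [getLast?_cons' _ _ _ hBh]; exact hBl
                · refine List.isChain_cons.mpr ?_
                  refine ⟨?_, hBc⟩
                  intro q hq; rw [hBh] at hq; simp at hq; subst hq
                  right; left; rfl
                · refine noSelfDiag_cons _ _ _ hBh hBn ?_
                  simp [Prod.ext_iff]
                · rw [edCost_cons X X _ _ _ hBh]
                  have h1 : edStep X X ((p.1, p'.1), (p.1, p'.1 + 1)) = 1 := by
                    simp [edStep, Prod.ext_iff]
                  have h2 : edStep X Y (p', ((p'.1 + 1, p'.2) : Pt)) = 1 := edStep_horiz X Y p'
                  rw [h1, h2]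
                  omega
              · rcases Nat.lt_trichotomy p.2 p'.2 with hy | hy | hy
                · -- advance A alone
                  rcases hbvd with hb | hb <;> subst hb <;>
                    simp only [pfst, psnd] at hmono
                  · -- A vertical : no emit
                    obtain ⟨B, hBh, hBl, hBc, hBn, hBcost⟩ :=
                      ih (((p.1, p.2 + 1) : Pt)::l) (p'::b'::l') ((p.1, p.2 + 1) : Pt) p'
                        (by simp at hk ⊢; omega) (by simp) (by simp) hl2 hl' hc2.2 hc' hdL
                    simp only [pfst, psnd] at hBh hBcost
                    rw [edCost_cons X Y p ((p.1, p.2 + 1) : Pt) (((p.1, p.2 + 1) : Pt)::l) rfl]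
                    refine ⟨B, hBh, hBl, hBc, hBn, ?_⟩
                    have h2 : edStep X Y (p, ((p.1, p.2 + 1) : Pt)) = 1 := edStep_vert X Y p
                    rw [h2]
                    have hstep := Rc_step j j' p.2 p'.2
                    omega
                  · -- A diagonal : emit horizontal, strict credit
                    have hyj : p.2 < j := Nat.lt_of_succ_le hmono.2
                    obtain ⟨B, hBh, hBl, hBc, hBn, hBcost⟩ :=
                      ih (((p.1 + 1, p.2 + 1) : Pt)::l) (p'::b'::l') ((p.1 + 1, p.2 + 1) : Pt) p'
                        (by simp at hk ⊢; omega) (by simp) (by simp) hl2 hl' hc2.2 hc' hdL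
                    simp only [pfst, psnd] at hBh hBcost
                    rw [edCost_cons X Y p ((p.1 + 1, p.2 + 1) : Pt) (((p.1 + 1, p.2 + 1) : Pt)::l) rfl]
                    refine ⟨(p.1, p'.1) :: B, by simp, ?_, ?_, ?_, ?_⟩
                    · rw [getLast?_cons' _ _ _ hBh]; exact hBl
                    · refine List.isChain_cons.mpr ?_
                      refine ⟨?_, hBc⟩
                      intro q hq; rw [hBh] at hq; simp at hq; subst hq
                      left; rfl
                    · refine noSelfDiag_cons _ _ _ hBh hBn ?_
                      simp [Prod.ext_iff]
                    · rw [edCost_cons X X _ _ _ hBh]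
                      have h1 : edStep X X ((p.1, p'.1), (p.1 + 1, p'.1)) = 1 := by
                        simp [edStep, Prod.ext_iff]
                      rw [h1]
                      have hstep := Rc_strict j j' p.2 p'.2 hy hyj
                      omega
                · -- equal heights : advance both
                  have hyj : p.2 < j := by
                    rcases hbvd with hb | hb <;> subst hb <;>
                      simp only [pfst, psnd] at hmono <;> omega
                  have hyj' : p.2 < j' := by
                    rcases hb'vd with hb' | hb' <;> subst hb' <;>
                      simp only [pfst, psnd] at hmono' <;> omega
                  have hR : Rc j j' (p.2 + 1) (p'.2 + 1) ≤ Rc j j' p.2 p'.2 := by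
                    rw [← hy]
                    exact Rc_both j j' p.2 hyj hyj'
                  rcases hbvd with hb | hb <;> rcases hb'vd with hb' | hb' <;>
                    subst hb <;> subst hb'
                  · -- both vertical : no emit
                    obtain ⟨B, hBh, hBl, hBc, hBn, hBcost⟩ :=
                      ih (((p.1, p.2 + 1) : Pt)::l) (((p'.1, p'.2 + 1) : Pt)::l') ((p.1, p.2 + 1) : Pt) ((p'.1, p'.2 + 1) : Pt)
                        (by simp at hk ⊢; omega) (by simp) (by simp) hl2 hl2'
                        hc2.2 hc2'.2 hdLR
                    simp only [pfst, psnd] at hBh hBcost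
                    rw [edCost_cons X Y p ((p.1, p.2 + 1) : Pt) (((p.1, p.2 + 1) : Pt)::l) rfl, edCost_cons X Y p' ((p'.1, p'.2 + 1) : Pt) (((p'.1, p'.2 + 1) : Pt)::l') rfl]
                    refine ⟨B, hBh, hBl, hBc, hBn, ?_⟩
                    have h2 : edStep X Y (p, ((p.1, p.2 + 1) : Pt)) = 1 := edStep_vert X Y p
                    have h3 : edStep X Y (p', ((p'.1, p'.2 + 1) : Pt)) = 1 := edStep_vert X Y p'
                    rw [h2, h3]
                    omega
                  · -- A vertical, A' diagonal : emit vertical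
                    obtain ⟨B, hBh, hBl, hBc, hBn, hBcost⟩ :=
                      ih (((p.1, p.2 + 1) : Pt)::l) (((p'.1 + 1, p'.2 + 1) : Pt)::l') ((p.1, p.2 + 1) : Pt) ((p'.1 + 1, p'.2 + 1) : Pt)
                        (by simp at hk ⊢; omega) (by simp) (by simp) hl2 hl2'
                        hc2.2 hc2'.2 hdLR
                    simp only [pfst, psnd] at hBh hBcost
                    rw [edCost_cons X Y p ((p.1, p.2 + 1) : Pt) (((p.1, p.2 + 1) : Pt)::l) rfl, edCost_cons X Y p' ((p'.1 + 1, p'.2 + 1) : Pt) (((p'.1 + 1, p'.2 + 1) : Pt)::l') rfl]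
                    refine ⟨(p.1, p'.1) :: B, by simp, ?_, ?_, ?_, ?_⟩
                    · rw [getLast?_cons' _ _ _ hBh]; exact hBl
                    · refine List.isChain_cons.mpr ?_
                      refine ⟨?_, hBc⟩
                      intro q hq; rw [hBh] at hq; simp at hq; subst hq
                      right; left; rfl
                    · refine noSelfDiag_cons _ _ _ hBh hBn ?_
                      simp [Prod.ext_iff]
                    · rw [edCost_cons X X _ _ _ hBh]
                      have h1 : edStep X X ((p.1, p'.1), (p.1, p'.1 + 1)) = 1 := by
                        simp [edStep, Prod.ext_iff]
                      have h2 : edStep X Y (p, ((p.1, p.2 + 1) : Pt)) = 1 := edStep_vert X Y p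
                      rw [h1, h2]
                      omega
                  · -- A diagonal, A' vertical : emit horizontal
                    obtain ⟨B, hBh, hBl, hBc, hBn, hBcost⟩ :=
                      ih (((p.1 + 1, p.2 + 1) : Pt)::l) (((p'.1, p'.2 + 1) : Pt)::l') ((p.1 + 1, p.2 + 1) : Pt) ((p'.1, p'.2 + 1) : Pt)
                        (by simp at hk ⊢; omega) (by simp) (by simp) hl2 hl2'
                        hc2.2 hc2'.2 hdLR
                    simp only [pfst, psnd] at hBh hBcost
                    rw [edCost_cons X Y p ((p.1 + 1, p.2 + 1) : Pt) (((p.1 + 1, p.2 + 1) : Pt)::l) rfl, edCost_cons X Y p' ((p'.1, p'.2 + 1) : Pt) (((p'.1, p'.2 + 1) : Pt)::l') rfl]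
                    refine ⟨(p.1, p'.1) :: B, by simp, ?_, ?_, ?_, ?_⟩
                    · rw [getLast?_cons' _ _ _ hBh]; exact hBl
                    · refine List.isChain_cons.mpr ?_
                      refine ⟨?_, hBc⟩
                      intro q hq; rw [hBh] at hq; simp at hq; subst hq
                      left; rfl
                    · refine noSelfDiag_cons _ _ _ hBh hBn ?_
                      simp [Prod.ext_iff]
                    · rw [edCost_cons X X _ _ _ hBh]
                      have h1 : edStep X X ((p.1, p'.1), (p.1 + 1, p'.1)) = 1 := by
                        simp [edStep, Prod.ext_iff]
                      have h3 : edStep X Y (p', ((p'.1, p'.2 + 1) : Pt)) = 1 := edStep_vert X Y p'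
                      rw [h1, h3]
                      omega
                  · -- both diagonal : emit diagonal edge
                    have hne : p.1 ≠ p'.1 := by
                      intro hx
                      have hpp : p' = p := Prod.ext hx.symm hy.symm
                      subst hpp
                      exact hd (p', ((p'.1 + 1, p'.2 + 1) : Pt)) rfl
                        (mem_edges_head p' _ l) (mem_edges_head p' _ l')
                    obtain ⟨B, hBh, hBl, hBc, hBn, hBcost⟩ :=
                      ih (((p.1 + 1, p.2 + 1) : Pt)::l) (((p'.1 + 1, p'.2 + 1) : Pt)::l') ((p.1 + 1, p.2 + 1) : Pt) ((p'.1 + 1, p'.2 + 1) : Pt)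
                        (by simp at hk ⊢; omega) (by simp) (by simp) hl2 hl2'
                        hc2.2 hc2'.2 hdLR
                    simp only [pfst, psnd] at hBh hBcost
                    rw [edCost_cons X Y p ((p.1 + 1, p.2 + 1) : Pt) (((p.1 + 1, p.2 + 1) : Pt)::l) rfl, edCost_cons X Y p' ((p'.1 + 1, p'.2 + 1) : Pt) (((p'.1 + 1, p'.2 + 1) : Pt)::l') rfl]
                    refine ⟨(p.1, p'.1) :: B, by simp, ?_, ?_, ?_, ?_⟩
                    · rw [getLast?_cons' _ _ _ hBh]; exact hBl
                    · refine List.isChain_cons.mpr ?_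
                      refine ⟨?_, hBc⟩
                      intro q hq; rw [hBh] at hq; simp at hq; subst hq
                      right; right; rfl
                    · refine noSelfDiag_cons _ _ _ hBh hBn ?_
                      simp [Prod.ext_iff]
                      intro hx
                      exact absurd hx hne
                    · rw [edCost_cons X X _ _ _ hBh]
                      have hle : edStep X X ((p.1, p'.1), (p.1 + 1, p'.1 + 1)) ≤
                          edStep X Y (p, ((p.1 + 1, p.2 + 1) : Pt)) +
                          edStep X Y (p', ((p'.1 + 1, p'.2 + 1) : Pt)) := by
                        have e1 : edStep X Y (p, ((p.1 + 1, p.2 + 1) : Pt)) =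
                            if X[p.1]? = Y[p.2]? then 0 else 1 := edStep_diag X Y p
                        have e2 : edStep X Y (p', ((p'.1 + 1, p'.2 + 1) : Pt)) =
                            if X[p'.1]? = Y[p'.2]? then 0 else 1 := edStep_diag X Y p'
                        have e3 : edStep X X ((p.1, p'.1), (p.1 + 1, p'.1 + 1)) =
                            if X[p.1]? = X[p'.1]? then 0 else 1 :=
                          edStep_diag X X (p.1, p'.1)
                        rw [e1, e2, e3]
                        by_cases h1 : X[p.1]? = Y[p.2]?
                        · by_cases h2 : X[p'.1]? = Y[p'.2]?
                          · have h3 : X[p.1]? = X[p'.1]? := by rw [h1, hy, ← h2]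
                            rw [if_pos h3, if_pos h1, if_pos h2]
                          · simp only [if_neg h2]
                            split_ifs <;> omega
                        · simp only [if_neg h1]
                          split_ifs <;> omega
                      omega
                · -- advance A' alone
                  rcases hb'vd with hb' | hb' <;> subst hb' <;>
                    simp only [pfst, psnd] at hmono'
                  · -- A' vertical : no emit
                    obtain ⟨B, hBh, hBl, hBc, hBn, hBcost⟩ :=
                      ih (p::b::l) (((p'.1, p'.2 + 1) : Pt)::l') p ((p'.1, p'.2 + 1) : Pt)
                        (by simp at hk ⊢; omega) (by simp) (by simp) hl hl2' hc hc2'.2 hdR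
                    simp only [pfst, psnd] at hBh hBcost
                    rw [edCost_cons X Y p' ((p'.1, p'.2 + 1) : Pt) (((p'.1, p'.2 + 1) : Pt)::l') rfl]
                    refine ⟨B, hBh, hBl, hBc, hBn, ?_⟩
                    have h2 : edStep X Y (p', ((p'.1, p'.2 + 1) : Pt)) = 1 := edStep_vert X Y p'
                    rw [h2]
                    have hstep : Rc j j' p.2 (p'.2 + 1) ≤ Rc j j' p.2 p'.2 + 1 := by
                      rw [Rc_symm j j' p.2 (p'.2 + 1), Rc_symm j j' p.2 p'.2]
                      exact Rc_step j' j p'.2 p.2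
                    omega
                  · -- A' diagonal : emit vertical, strict credit
                    have hyj' : p'.2 < j' := Nat.lt_of_succ_le hmono'.2
                    obtain ⟨B, hBh, hBl, hBc, hBn, hBcost⟩ :=
                      ih (p::b::l) (((p'.1 + 1, p'.2 + 1) : Pt)::l') p ((p'.1 + 1, p'.2 + 1) : Pt)
                        (by simp at hk ⊢; omega) (by simp) (by simp) hl hl2' hc hc2'.2 hdR
                    simp only [pfst, psnd] at hBh hBcost
                    rw [edCost_cons X Y p' ((p'.1 + 1, p'.2 + 1) : Pt) (((p'.1 + 1, p'.2 + 1) : Pt)::l') rfl]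
                    refine ⟨(p.1, p'.1) :: B, by simp, ?_, ?_, ?_, ?_⟩
                    · rw [getLast?_cons' _ _ _ hBh]; exact hBl
                    · refine List.isChain_cons.mpr ?_
                      refine ⟨?_, hBc⟩
                      intro q hq; rw [hBh] at hq; simp at hq; subst hq
                      right; left; rfl
                    · refine noSelfDiag_cons _ _ _ hBh hBn ?_
                      simp [Prod.ext_iff]
                    · rw [edCost_cons X X _ _ _ hBh]
                      have h1 : edStep X X ((p.1, p'.1), (p.1, p'.1 + 1)) = 1 := by
                        simp [edStep, Prod.ext_iff]
                      rw [h1]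
                      have hstep : Rc j j' p.2 (p'.2 + 1) + 1 ≤ Rc j j' p.2 p'.2 := by
                        rw [Rc_symm j j' p.2 (p'.2 + 1), Rc_symm j j' p.2 p'.2]
                        exact Rc_strict j' j p'.2 p.2 hy hyj'
                      omega
/-- Disjoint alignments of `X` onto two fragments of `Y`
bound the self-edit distance of `X`. -/
theorem selfed_le_of_disjoint_fragment_alignments {α : Type*} [DecidableEq α]
    (X Y : List α) (i j i' j' : ℕ)
    (hij : i ≤ j) (hj : j ≤ Y.length) (hij' : i' ≤ j') (hj' : j' ≤ Y.length)
    (A A' : List Pt)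
    (hA : IsPath (0, i) (X.length, j) A)
    (hA' : IsPath (0, i') (X.length, j') A')
    (hdisj : ∀ e : Pt × Pt, e.2 = (e.1.1 + 1, e.1.2 + 1) →
      e ∈ edges A → e ∉ edges A') :
    selfed X ≤ Nat.dist i i' + edCost X Y A + edCost X Y A' + Nat.dist j j' := by
  obtain ⟨hAh, hAl, hAc⟩ := hA
  obtain ⟨hA'h, hA'l, hA'c⟩ := hA'
  obtain ⟨B, hBh, hBl, hBc, hBn, hBcost⟩ :=
    key X Y j j' (A.length + A'.length) A A' (0, i) (0, i') le_rfl
      hAh hA'h hAl hA'l hAc hA'c hdisj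
  simp only [pfst, psnd] at hBh hBcost
  have h1 : selfed X ≤ edCost X X B :=
    Nat.sInf_le ⟨B, ⟨hBh, hBl, hBc⟩, hBn, rfl⟩
  have h2 := Rc_start i j i' j' hij hij'
  omega
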